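/- Let T be a lobster on at least 4 vertices with a perfect matching given by the edge set M, where M is exactly the set of end edges of T, and let P = v₀, v₁, …, v_p be a path in T of maximal length such that every vertex of T is at distance at most 2 from some vertex of P. Then every vertex v_i of P with i ∉ {0, 1, p−1, p} is matched under M with an end vertex u_i of T that does not lie on P. -/
import Mathlib


open SimpleGraph

/-- A graceful labelling of a graph `G` with `m` edges: an injective function
`f` from the vertices into `{0, 1, …, m}` such that the induced edge labels
`|f u − f v|` are pairwise distinct over the edges. -/
def IsGracefulLabeling {V : Type} (G : SimpleGraph V) (f : V → ℕ) : Prop :=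
  Function.Injective f ∧ (∀ v, f v ≤ G.edgeSet.ncard) ∧
  ∀ u v x y : V, G.Adj u v → G.Adj x y →
    Nat.dist (f u) (f v) = Nat.dist (f x) (f y) → s(u, v) = s(x, y)

/-- A strong graceful labelling of `G` on `n` vertices with respect to a matching `M`:
a graceful labelling such that `f x + f y = n - 1` for every edge `xy ∈ M`. -/
def IsStrongGracefulLabeling {V : Type} [Fintype V] (G : SimpleGraph V)
    (M : G.Subgraph) (f : V → ℕ) : Prop :=
  IsGracefulLabeling G f ∧ ∀ x y : V, M.Adj x y → f x + f y = Fintype.card V - 1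


/-- An end edge of `G`: an edge incident with a vertex of degree 1. -/
def IsEndEdge {V : Type} (G : SimpleGraph V) (e : Sym2 V) : Prop :=
  e ∈ G.edgeSet ∧ ∃ x ∈ e, (G.neighborSet x).ncard = 1

/-- `v 0, v 1, …, v p` is a path in `G` (injective on indices `≤ p`, consecutive
vertices adjacent) such that every vertex of `G` is at distance at most `k` from
some vertex of the path, and the path has maximal length among all such paths. -/
def IsMaxDomPath {V : Type} (G : SimpleGraph V) (k p : ℕ) (v : ℕ → V) : Prop :=
  (∀ i ≤ p, ∀ j ≤ p, v i = v j → i = j) ∧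
  (∀ i < p, G.Adj (v i) (v (i + 1))) ∧
  (∀ w, ∃ i ≤ p, G.dist w (v i) ≤ k) ∧
  ∀ (q : ℕ) (u : ℕ → V), (∀ i ≤ q, ∀ j ≤ q, u i = u j → i = j) →
    (∀ i < q, G.Adj (u i) (u (i + 1))) →
    (∀ w, ∃ i ≤ q, G.dist w (u i) ≤ k) → q ≤ p

/-- In a lobster `T` on at least 4 vertices whose set of end edges is a perfect matching
`M`, if `P = v 0, …, v p` is a maximal path such that every vertex is at distance at
most 2 from `P`, then every vertex `v i` with `i ∉ {0, 1, p-1, p}` is matched under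
`M` with an end vertex not lying on `P`. -/
theorem lobster_spine_interior_matched_off_path {V : Type} [Fintype V] (G : SimpleGraph V)
    (hT : G.IsTree) (hcard : 4 ≤ Fintype.card V)
    (M : G.Subgraph) (hM : M.IsPerfectMatching)
    (hMend : ∀ e, e ∈ M.edgeSet ↔ IsEndEdge G e)
    (p : ℕ) (v : ℕ → V) (hP : IsMaxDomPath G 2 p v) :
    ∀ i, 2 ≤ i → i + 2 ≤ p →
      ∃ u : V, M.Adj (v i) u ∧ (G.neighborSet u).ncard = 1 ∧ ∀ j ≤ p, u ≠ v j := by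
  obtain ⟨hmatch, hspan⟩ := hM
  obtain ⟨hinj, hadj, -, -⟩ := hP
  intro i hi2 hip
  obtain ⟨u, hu, -⟩ := hmatch (hspan (v i))
  have hGadj : G.Adj (v i) u := M.adj_sub hu
  have hmem : s(v i, u) ∈ M.edgeSet := SimpleGraph.Subgraph.mem_edgeSet.mpr hu
  obtain ⟨-, x, hx, hx1⟩ := (hMend _).1 hmem
  have hp0 : 0 < p := by omega
  have key : ∀ j, 0 < j → j < p → (G.neighborSet (v j)).ncard ≠ 1 := by
    intro j hj0 hjp h1
    obtain ⟨a, ha⟩ := Set.ncard_eq_one.mp h1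
    have h1m : v (j - 1) ∈ G.neighborSet (v j) := by
      have := hadj (j - 1) (by omega)
      rw [show j - 1 + 1 = j by omega] at this
      exact (G.mem_neighborSet _ _).mpr this.symm
    have h2m : v (j + 1) ∈ G.neighborSet (v j) := (G.mem_neighborSet _ _).mpr (hadj j hjp)
    rw [ha, Set.mem_singleton_iff] at h1m h2m
    have := hinj (j - 1) (by omega) (j + 1) (by omega) (h1m.trans h2m.symm)
    omega
  have hxu : x = u := by
    rcases Sym2.mem_iff.mp hx with h | h
    · exact absurd (h ▸ hx1) (key i (by omega) (by omega))
    · exact h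
  rw [hxu] at hx1
  refine ⟨u, hu, hx1, ?_⟩
  intro j hj hequ
  obtain ⟨a, ha⟩ := Set.ncard_eq_one.mp hx1
  have hvia : v i = a := by
    have : v i ∈ G.neighborSet u := (G.mem_neighborSet _ _).mpr hGadj.symm
    rwa [ha, Set.mem_singleton_iff] at this
  by_cases hj0 : j = 0
  · subst hj0
    have h1 : v 1 ∈ G.neighborSet u := by rw [hequ]; exact (G.mem_neighborSet _ _).mpr (hadj 0 hp0)
    rw [ha, Set.mem_singleton_iff] at h1
    have := hinj 1 (by omega) i (by omega) (h1.trans hvia.symm)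
    omega
  · by_cases hjp : j = p
    · have h1 : v (p - 1) ∈ G.neighborSet u := by
        rw [hequ, hjp]
        have := hadj (p - 1) (by omega)
        rw [show p - 1 + 1 = p by omega] at this
        exact (G.mem_neighborSet _ _).mpr this.symm
      rw [ha, Set.mem_singleton_iff] at h1
      have := hinj (p - 1) (by omega) i (by omega) (h1.trans hvia.symm)
      omega
    · rw [hequ] at hx1
      exact key j (by omega) (by omega) hx1
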